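/- Let F be a family of connected r-uniform hypergraphs and let m ≤ n be positive integers with n ≥ m + r. Then ex(m, F) ≤ (1 - ((n - m - r)/n)^r) · ex(n, F), where ex(k, F) denotes the maximum number of edges in an F-free r-graph on k vertices. -/

import Mathlib

/-- `F` is contained in `H` as a subgraph (hypergraph copy). -/
def HContains (F : Finset (Finset ℕ)) {V : Type*} [DecidableEq V]
    (H : Finset (Finset V)) : Prop :=
  ∃ f : ℕ → V, Set.InjOn f ↑(F.sup id) ∧ ∀ e ∈ F, e.image f ∈ H

/-- Turán number of a family of hypergraphs among `r`-uniform hypergraphs on `n` vertices. -/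
noncomputable def exH (r : ℕ) (Fam : Set (Finset (Finset ℕ))) (n : ℕ) : ℕ :=
  sSup {k | ∃ H : Finset (Finset (Fin n)), (∀ e ∈ H, e.card = r) ∧
    (∀ F ∈ Fam, ¬ HContains F H) ∧ H.card = k}

/-- An `r`-graph is connected: any two vertices of its support are joined by a path
in the graph of pairs contained in a common edge. -/
def HConnected (F : Finset (Finset ℕ)) : Prop :=
  ∀ u ∈ F.sup id, ∀ v ∈ F.sup id,
    Relation.ReflTransGen (fun a b => ∃ e ∈ F, a ∈ e ∧ b ∈ e) u v

open Finset

def SpecSet (r : ℕ) (Fam : Set (Finset (Finset ℕ))) (n : ℕ) : Set ℕ :=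
  {k | ∃ H : Finset (Finset (Fin n)), (∀ e ∈ H, e.card = r) ∧
    (∀ F ∈ Fam, ¬ HContains F H) ∧ H.card = k}

lemma exH_eq (r : ℕ) (Fam : Set (Finset (Finset ℕ))) (n : ℕ) :
    exH r Fam n = sSup (SpecSet r Fam n) := rfl

lemma specSet_bdd (r : ℕ) (Fam : Set (Finset (Finset ℕ))) (n : ℕ) :
    BddAbove (SpecSet r Fam n) := by
  refine ⟨((Finset.univ : Finset (Fin n)).powersetCard r).card, ?_⟩
  rintro k ⟨H, h1, _, rfl⟩
  apply Finset.card_le_card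
  intro e he
  exact Finset.mem_powersetCard_univ.mpr (h1 e he)

lemma specSet_zero (r : ℕ) (Fam : Set (Finset (Finset ℕ))) (n : ℕ)
    (hFam : ∀ F ∈ Fam, F.Nonempty) : 0 ∈ SpecSet r Fam n := by
  refine ⟨∅, by simp, ?_, by simp⟩
  rintro F hF ⟨f, _, hedges⟩
  obtain ⟨e, he⟩ := hFam F hF
  exact absurd (hedges e he) (by simp)

lemma le_exH {r : ℕ} {Fam : Set (Finset (Finset ℕ))} {n k : ℕ}
    (hk : k ∈ SpecSet r Fam n) : k ≤ exH r Fam n :=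
  le_csSup (specSet_bdd r Fam n) hk

lemma exists_extremal (r : ℕ) (Fam : Set (Finset (Finset ℕ))) (n : ℕ)
    (hFam : ∀ F ∈ Fam, F.Nonempty) :
    ∃ H : Finset (Finset (Fin n)), (∀ e ∈ H, e.card = r) ∧
      (∀ F ∈ Fam, ¬ HContains F H) ∧ H.card = exH r Fam n := by
  have := Nat.sSup_mem ⟨0, specSet_zero r Fam n hFam⟩ (specSet_bdd r Fam n)
  exact this


lemma mem_sup_id' {F : Finset (Finset ℕ)} {x : ℕ} :
    x ∈ F.sup id ↔ ∃ e ∈ F, x ∈ e := by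
  simp [Finset.mem_sup]

section transfer
set_option linter.unusedSectionVars false
variable {V W : Type*} [DecidableEq V] [DecidableEq W]

lemma push_unif {ι : V → W} (hι : Function.Injective ι) {H : Finset (Finset V)} {r : ℕ}
    (h1 : ∀ e ∈ H, e.card = r) : ∀ e ∈ H.image (Finset.image ι), e.card = r := by
  intro e he
  obtain ⟨e₀, he₀, rfl⟩ := Finset.mem_image.mp he
  rw [Finset.card_image_of_injective _ hι]
  exact h1 e₀ he₀

lemma push_card {ι : V → W} (hι : Function.Injective ι) (H : Finset (Finset V)) :
    (H.image (Finset.image ι)).card = H.card :=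
  Finset.card_image_of_injective _ (Finset.image_injective hι)

lemma push_free [Nonempty V] {ι : V → W} (hι : Function.Injective ι) {H : Finset (Finset V)}
    {F : Finset (Finset ℕ)} (hc : HContains F (H.image (Finset.image ι))) :
    HContains F H := by
  obtain ⟨f, hinj, hedges⟩ := hc
  set σ := Function.invFun ι with hσ
  have hrange : ∀ x ∈ F.sup id, ι (σ (f x)) = f x := by
    intro x hx
    obtain ⟨e, heF, hxe⟩ := mem_sup_id'.mp hx
    obtain ⟨e₀, _, he₀⟩ := Finset.mem_image.mp (hedges e heF)
    have : f x ∈ Finset.image ι e₀ := he₀ ▸ Finset.mem_image_of_mem f hxe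
    obtain ⟨y, _, hy⟩ := Finset.mem_image.mp this
    exact Function.invFun_eq ⟨y, hy⟩
  refine ⟨σ ∘ f, ?_, ?_⟩
  · intro x hx y hy hxy
    apply hinj hx hy
    have hxy' : σ (f x) = σ (f y) := hxy
    rw [← hrange x (Finset.mem_coe.mp hx), ← hrange y (Finset.mem_coe.mp hy), hxy']
  · intro e heF
    obtain ⟨e₀, he₀H, he₀⟩ := Finset.mem_image.mp (hedges e heF)
    have : e.image (σ ∘ f) = e₀ := by
      rw [← Finset.image_image, ← he₀, Finset.image_image]
      have : ∀ y ∈ e₀, (σ ∘ ι) y = y := fun y _ => Function.leftInverse_invFun hι y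
      rw [Finset.image_congr (fun y hy => this y hy), Finset.image_id']
    rw [this]; exact he₀H

-- pullback: graph on W with all edges inside range ι yields a graph on V
lemma pullback [Nonempty V] {ι : V → W} (hι : Function.Injective ι) {H : Finset (Finset W)}
    {r : ℕ} {Fam : Set (Finset (Finset ℕ))}
    (h1 : ∀ e ∈ H, e.card = r) (h2 : ∀ F ∈ Fam, ¬ HContains F H)
    (hsub : ∀ e ∈ H, ∀ x ∈ e, ∃ y, ι y = x) :
    ∃ H' : Finset (Finset V), (∀ e ∈ H', e.card = r) ∧
      (∀ F ∈ Fam, ¬ HContains F H') ∧ H'.card = H.card := by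
  set σ := Function.invFun ι with hσ
  have key : ∀ e ∈ H, Finset.image ι (Finset.image σ e) = e := by
    intro e he
    rw [Finset.image_image]
    have : ∀ x ∈ e, (ι ∘ σ) x = x := by
      intro x hx
      exact Function.invFun_eq (hsub e he x hx)
    rw [Finset.image_congr (fun x hx => this x hx), Finset.image_id']
  refine ⟨H.image (Finset.image σ), ?_, ?_, ?_⟩
  · intro e he
    obtain ⟨e₀, he₀, rfl⟩ := Finset.mem_image.mp he
    rw [← h1 e₀ he₀]
    apply Finset.card_image_of_injOn
    intro x hx y hy hxy
    have hx' : ι (σ x) = x := Function.invFun_eq (hsub e₀ he₀ x hx)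
    have hy' : ι (σ y) = y := Function.invFun_eq (hsub e₀ he₀ y hy)
    rw [← hx', ← hy', hxy]
  · intro F hF hc
    apply h2 F hF
    obtain ⟨f, hinj, hedges⟩ := hc
    refine ⟨ι ∘ f, fun x hx y hy hxy => hinj hx hy (hι hxy), ?_⟩
    intro e heF
    obtain ⟨e₀, he₀H, he₀⟩ := Finset.mem_image.mp (hedges e heF)
    have : e.image (ι ∘ f) = e₀ := by
      rw [← Finset.image_image, ← he₀, key e₀ he₀H]
    rw [this]; exact he₀H
  · apply Finset.card_image_of_injOn
    intro e₁ h₁ e₂ h₂ h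
    rw [← key e₁ h₁, ← key e₂ h₂, h]

end transfer

lemma superadd (r a b : ℕ) (Fam : Set (Finset (Finset ℕ)))
    (hr : 1 ≤ r) (ha : 1 ≤ a) (hb : 1 ≤ b)
    (hFam : ∀ F ∈ Fam, F.Nonempty)
    (hunif : ∀ F ∈ Fam, ∀ e ∈ F, e.card = r)
    (hconn : ∀ F ∈ Fam, HConnected F) :
    exH r Fam a + exH r Fam b ≤ exH r Fam (a + b) := by
  have hNa : Nonempty (Fin a) := ⟨⟨0, ha⟩⟩
  have hNb : Nonempty (Fin b) := ⟨⟨0, hb⟩⟩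
  obtain ⟨H₁, h1u, h1f, h1c⟩ := exists_extremal r Fam a hFam
  obtain ⟨H₂, h2u, h2f, h2c⟩ := exists_extremal r Fam b hFam
  have hι₁inj : Function.Injective (Fin.castAdd b : Fin a → Fin (a + b)) := fun i j h => by
    apply Fin.ext; have := congrArg Fin.val h; simpa using this
  have hι₂inj : Function.Injective (Fin.natAdd a : Fin b → Fin (a + b)) := fun i j h => by
    apply Fin.ext; have := congrArg Fin.val h
    simp only [Fin.coe_natAdd] at this; omega
  set K₁ : Finset (Finset (Fin (a + b))) := H₁.image (Finset.image (Fin.castAdd b)) with hK₁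
  set K₂ : Finset (Finset (Fin (a + b))) := H₂.image (Finset.image (Fin.natAdd a)) with hK₂
  have hK₁u : ∀ e ∈ K₁, e.card = r := push_unif hι₁inj h1u
  have hK₂u : ∀ e ∈ K₂, e.card = r := push_unif hι₂inj h2u
  have hK₁side : ∀ e ∈ K₁, ∀ x ∈ e, (x : Fin (a+b)).val < a := by
    rintro e he x hx
    obtain ⟨e₀, _, rfl⟩ := Finset.mem_image.mp he
    obtain ⟨y, _, rfl⟩ := Finset.mem_image.mp hx
    exact y.isLt
  have hK₂side : ∀ e ∈ K₂, ∀ x ∈ e, a ≤ (x : Fin (a+b)).val := by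
    rintro e he x hx
    obtain ⟨e₀, _, rfl⟩ := Finset.mem_image.mp he
    obtain ⟨y, _, rfl⟩ := Finset.mem_image.mp hx
    simp
  have hdisj : Disjoint K₁ K₂ := by
    rw [Finset.disjoint_left]
    intro e he1 he2
    have hcard : e.card = r := hK₁u e he1
    have hne : e.Nonempty := Finset.card_pos.mp (by omega)
    obtain ⟨x, hx⟩ := hne
    exact absurd (hK₂side e he2 x hx) (by have := hK₁side e he1 x hx; omega)
  have hfree : ∀ F ∈ Fam, ¬ HContains F (K₁ ∪ K₂) := by
    intro F hF hc
    obtain ⟨f, hinj, hedges⟩ := hc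
    have hdich : ∀ e ∈ F, (∀ x ∈ e, (f x).val < a) ∨ (∀ x ∈ e, a ≤ (f x).val) := by
      intro e he
      rcases Finset.mem_union.mp (hedges e he) with h | h
      · exact Or.inl fun x hx => hK₁side _ h _ (Finset.mem_image_of_mem f hx)
      · exact Or.inr fun x hx => hK₂side _ h _ (Finset.mem_image_of_mem f hx)
    obtain ⟨e₀, he₀⟩ := hFam F hF
    have he₀ne : e₀.Nonempty := by
      have := hunif F hF e₀ he₀; exact Finset.card_pos.mp (by omega)
    obtain ⟨x₀, hx₀⟩ := he₀ne
    have hx₀sup : x₀ ∈ F.sup id := mem_sup_id'.mpr ⟨e₀, he₀, hx₀⟩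
    have key : ∀ v, Relation.ReflTransGen (fun a b => ∃ e ∈ F, a ∈ e ∧ b ∈ e) x₀ v →
        ((f v).val < a ↔ (f x₀).val < a) := by
      intro v hrel
      induction hrel with
      | refl => rfl
      | tail _ hstep ih =>
        rename_i b' c' _
        obtain ⟨e, heF, hbe, hce⟩ := hstep
        rw [← ih]
        rcases hdich e heF with h | h
        · simp [h b' hbe, h c' hce]
        · have := h b' hbe; have := h c' hce
          constructor <;> intro <;> omega
    have hsame : ∀ v ∈ F.sup id, ((f v).val < a ↔ (f x₀).val < a) := fun v hv =>
      key v (hconn F hF x₀ hx₀sup v hv)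
    have hedgene : ∀ e ∈ F, e.Nonempty := fun e he =>
      Finset.card_pos.mp (by have := hunif F hF e he; omega)
    by_cases hside : (f x₀).val < a
    · refine h1f F hF (push_free hι₁inj ⟨f, hinj, ?_⟩)
      intro e heF
      rcases Finset.mem_union.mp (hedges e heF) with h | h
      · exact h
      · exfalso
        obtain ⟨x, hx⟩ := hedgene e heF
        have hxs : x ∈ F.sup id := mem_sup_id'.mpr ⟨e, heF, hx⟩
        have h1 : a ≤ (f x).val := hK₂side _ h _ (Finset.mem_image_of_mem f hx)
        have h2 : (f x).val < a := (hsame x hxs).mpr hside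
        omega
    · refine h2f F hF (push_free hι₂inj ⟨f, hinj, ?_⟩)
      intro e heF
      rcases Finset.mem_union.mp (hedges e heF) with h | h
      · exfalso
        obtain ⟨x, hx⟩ := hedgene e heF
        have hxs : x ∈ F.sup id := mem_sup_id'.mpr ⟨e, heF, hx⟩
        have h1 : (f x).val < a := hK₁side _ h _ (Finset.mem_image_of_mem f hx)
        have h2 : ¬ ((f x).val < a) := fun hlt => hside ((hsame x hxs).mp hlt)
        omega
      · exact h
  have hcard : (K₁ ∪ K₂).card = exH r Fam a + exH r Fam b := by
    rw [Finset.card_union_of_disjoint hdisj, hK₁, hK₂,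
      push_card hι₁inj, push_card hι₂inj, h1c, h2c]
  have hmem : exH r Fam a + exH r Fam b ∈ SpecSet r Fam (a + b) := by
    refine ⟨K₁ ∪ K₂, ?_, hfree, hcard⟩
    intro e he
    rcases Finset.mem_union.mp he with h | h
    · exact hK₁u e h
    · exact hK₂u e h
  exact le_exH hmem

lemma deletion (r k : ℕ) (Fam : Set (Finset (Finset ℕ)))
    (hk : 2 ≤ k) (hFam : ∀ F ∈ Fam, F.Nonempty) :
    (k - r) * exH r Fam k ≤ k * exH r Fam (k - 1) := by
  obtain ⟨k', rfl⟩ : ∃ k', k = k' + 1 := ⟨k - 1, by omega⟩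
  have hk' : 1 ≤ k' := by omega
  obtain ⟨H, hu, hf, hc⟩ := exists_extremal r Fam (k' + 1) hFam
  have hsum : ∑ v ∈ Finset.univ, (H.filter (fun e => v ∈ e)).card = r * H.card := by
    have h1 : ∀ v : Fin (k' + 1),
        (H.filter (fun e => v ∈ e)).card = ∑ e ∈ H, if v ∈ e then 1 else 0 :=
      fun v => Finset.card_filter _ _
    rw [Finset.sum_congr rfl (fun v _ => h1 v), Finset.sum_comm]
    have h2 : ∀ e ∈ H, (∑ v ∈ Finset.univ, if v ∈ e then 1 else 0) = r := by
      intro e he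
      rw [Finset.sum_ite_mem, Finset.univ_inter, ← hu e he]
      simp
    rw [Finset.sum_congr rfl h2, Finset.sum_const, smul_eq_mul, mul_comm]
  have hex : ∃ v : Fin (k' + 1), (k' + 1) * (H.filter (fun e => v ∈ e)).card ≤ r * H.card := by
    by_contra hcon
    push_neg at hcon
    have hall : ∀ v ∈ (Finset.univ : Finset (Fin (k' + 1))),
        r * H.card + 1 ≤ (k' + 1) * (H.filter (fun e => v ∈ e)).card := by
      intro v _; have := hcon v; omega
    have hle := Finset.sum_le_sum hall
    rw [Finset.sum_const, Finset.card_univ, Fintype.card_fin, ← Finset.mul_sum, hsum,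
      smul_eq_mul] at hle
    nlinarith
  obtain ⟨v, hv⟩ := hex
  set H' : Finset (Finset (Fin (k' + 1))) := H.filter (fun e => v ∉ e) with hH'
  have hH'card : H'.card = H.card - (H.filter (fun e => v ∈ e)).card := by
    have := Finset.card_filter_add_card_filter_not (s := H) (p := fun e => v ∈ e)
    rw [hH']
    omega
  have hι : Function.Injective (Fin.succAbove v) := Fin.succAbove_right_injective
  have hsub : ∀ e ∈ H', ∀ x ∈ e, ∃ y, Fin.succAbove v y = x := by
    intro e he x hx
    have hxv : x ≠ v := by
      rintro rfl
      exact (Finset.mem_filter.mp he).2 hx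
    exact Fin.exists_succAbove_eq hxv
  have hH'u : ∀ e ∈ H', e.card = r := fun e he => hu e (Finset.filter_subset _ _ he)
  have hH'f : ∀ F ∈ Fam, ¬ HContains F H' := by
    intro F hF hcon
    apply hf F hF
    obtain ⟨f, hinj, hedges⟩ := hcon
    exact ⟨f, hinj, fun e he => Finset.filter_subset _ _ (hedges e he)⟩
  have hNk' : Nonempty (Fin k') := ⟨⟨0, hk'⟩⟩
  obtain ⟨H'', h''u, h''f, h''c⟩ := pullback hι hH'u hH'f hsub
  have hmem : H''.card ∈ SpecSet r Fam k' := ⟨H'', h''u, h''f, rfl⟩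
  have hle : H.card - (H.filter (fun e => v ∈ e)).card ≤ exH r Fam k' := by
    rw [← hH'card, ← h''c]; exact le_exH hmem
  have hdv : (H.filter (fun e => v ∈ e)).card ≤ H.card := Finset.card_filter_le _ _
  -- arithmetic
  have h1 : (k' + 1 - r) * H.card ≤ (k' + 1) * (H.card - (H.filter (fun e => v ∈ e)).card) := by
    rw [Nat.sub_mul, Nat.mul_sub]
    apply Nat.sub_le_sub_left
    exact hv
  calc (k' + 1 - r) * exH r Fam (k' + 1) = (k' + 1 - r) * H.card := by rw [hc]
    _ ≤ (k' + 1) * (H.card - (H.filter (fun e => v ∈ e)).card) := h1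
    _ ≤ (k' + 1) * exH r Fam k' := Nat.mul_le_mul_left _ hle
    _ = (k' + 1) * exH r Fam (k' + 1 - 1) := by norm_num

lemma prod_tele (k r : ℕ) :
    k * ∏ i ∈ Finset.range r, (k - 1 - i) = (∏ i ∈ Finset.range r, (k - i)) * (k - r) := by
  have h1 : ∏ i ∈ Finset.range (r+1), (k - i) = (∏ i ∈ Finset.range r, (k - (i+1))) * k :=
    Finset.prod_range_succ' (fun i => k - i) r
  have h2 : ∏ i ∈ Finset.range (r+1), (k - i) = (∏ i ∈ Finset.range r, (k - i)) * (k - r) :=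
    Finset.prod_range_succ _ r
  have h3 : ∏ i ∈ Finset.range r, (k - (i+1)) = ∏ i ∈ Finset.range r, (k - 1 - i) :=
    Finset.prod_congr rfl (fun i _ => by omega)
  rw [← h2, h1, h3, mul_comm]

lemma chain (r n : ℕ) (Fam : Set (Finset (Finset ℕ)))
    (hr : 1 ≤ r) (hFam : ∀ F ∈ Fam, F.Nonempty) :
    ∀ j, j + r ≤ n →
      (∏ i ∈ Finset.range r, (n - j - i)) * exH r Fam n ≤
        (∏ i ∈ Finset.range r, (n - i)) * exH r Fam (n - j) := by
  intro j
  induction j with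
  | zero => intro _; simp
  | succ j ih =>
    intro hj
    have hj' : j + r ≤ n := by omega
    have ihj := ih hj'
    set k := n - j with hk
    have hkr : r + 1 ≤ k := by omega
    have hkey : n - (j + 1) = k - 1 := by omega
    have hgoalrw : ∀ i, n - (j + 1) - i = k - 1 - i := fun i => by omega
    rw [Finset.prod_congr rfl (fun i _ => hgoalrw i), hkey]
    have hdel := deletion r k Fam (by omega) hFam
    refine Nat.le_of_mul_le_mul_left ?_ (show 0 < k by omega)
    calc k * ((∏ i ∈ Finset.range r, (k - 1 - i)) * exH r Fam n)
        = (k * ∏ i ∈ Finset.range r, (k - 1 - i)) * exH r Fam n := by ring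
      _ = ((∏ i ∈ Finset.range r, (k - i)) * (k - r)) * exH r Fam n := by rw [prod_tele]
      _ = (k - r) * ((∏ i ∈ Finset.range r, (k - i)) * exH r Fam n) := by ring
      _ ≤ (k - r) * ((∏ i ∈ Finset.range r, (n - i)) * exH r Fam k) := by
          apply Nat.mul_le_mul_left
          have : ∀ i, k - i = n - j - i := fun i => by omega
          rw [Finset.prod_congr rfl (fun i _ => this i)]
          exact ihj
      _ = (∏ i ∈ Finset.range r, (n - i)) * ((k - r) * exH r Fam k) := by ring
      _ ≤ (∏ i ∈ Finset.range r, (n - i)) * (k * exH r Fam (k - 1)) :=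
          Nat.mul_le_mul_left _ hdel
      _ = k * ((∏ i ∈ Finset.range r, (n - i)) * exH r Fam (k - 1)) := by ring

theorem stmt0 (r m n : ℕ) (Fam : Set (Finset (Finset ℕ)))
    (hr : 1 ≤ r) (hm : 1 ≤ m) (hmn : m ≤ n) (hnr : m + r ≤ n)
    (hunif : ∀ F ∈ Fam, ∀ e ∈ F, e.card = r)
    (hconn : ∀ F ∈ Fam, HConnected F) :
    (exH r Fam m : ℝ) ≤
      (1 - (((n : ℝ) - m - r) / n) ^ r) * exH r Fam n := by
  by_cases hempty : ∅ ∈ Fam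
  · have hz : ∀ N, 1 ≤ N → exH r Fam N = 0 := by
      intro N hN
      have hS : SpecSet r Fam N = ∅ := by
        ext k
        simp only [Set.mem_empty_iff_false, iff_false]
        rintro ⟨H, _, hfree, _⟩
        refine hfree ∅ hempty ⟨fun _ => ⟨0, hN⟩, ?_, ?_⟩
        · simp
        · simp
      rw [exH_eq, hS]
      exact csSup_empty
    rw [hz m hm, hz n (by omega)]
    norm_num
  · have hFam : ∀ F ∈ Fam, F.Nonempty := by
      intro F hF
      rcases Finset.eq_empty_or_nonempty F with rfl | h
      · exact absurd hF hempty
      · exact h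
    have hsup : exH r Fam m + exH r Fam (n - m) ≤ exH r Fam n := by
      have := superadd r m (n - m) Fam hr hm (by omega) hFam hunif hconn
      rwa [show m + (n - m) = n by omega] at this
    have hch := chain r n Fam hr hFam m (by omega)
    set P := ∏ i ∈ Finset.range r, (n - m - i) with hP
    set Q := ∏ i ∈ Finset.range r, (n - i) with hQ
    have hQpos : 0 < Q := by
      rw [hQ]
      apply Finset.prod_pos
      intro i hi
      have : i < r := Finset.mem_range.mp hi
      omega
    have hnpos : 0 < (n : ℝ) := by
      have : 0 < n := by omega
      exact_mod_cast this
    -- cast the base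
    have hbase : ((n : ℝ) - m - r) = ((n - m - r : ℕ) : ℝ) := by
      rw [Nat.cast_sub (by omega : r ≤ n - m), Nat.cast_sub hmn]
    rw [hbase]
    -- key: q * exH n ≤ exH (n - m) over ℝ
    have hkey : (((n - m - r : ℕ) : ℝ) / n) ^ r * (exH r Fam n : ℝ)
        ≤ (exH r Fam (n - m) : ℝ) := by
      have hQR : (0:ℝ) < (Q : ℝ) := by exact_mod_cast hQpos
      rw [← mul_le_mul_iff_of_pos_right hQR]
      have hqQ : (((n - m - r : ℕ) : ℝ) / n) ^ r * (Q : ℝ) ≤ (P : ℝ) := by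
        rw [hP, hQ, Nat.cast_prod, Nat.cast_prod]
        have hcr : (((n - m - r : ℕ) : ℝ) / n) ^ r
            = ∏ _i ∈ Finset.range r, (((n - m - r : ℕ) : ℝ) / n) := by
          rw [Finset.prod_const, Finset.card_range]
        rw [hcr, ← Finset.prod_mul_distrib]
        apply Finset.prod_le_prod
        · intro i _
          positivity
        · intro i hi
          have hir : i < r := Finset.mem_range.mp hi
          rw [div_mul_eq_mul_div, div_le_iff₀ hnpos]
          have : (n - m - r) * (n - i) ≤ (n - m - i) * n :=
            Nat.mul_le_mul (by omega) (by omega)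
          exact_mod_cast this
      have hEn : (0:ℝ) ≤ (exH r Fam n : ℝ) := Nat.cast_nonneg _
      calc (((n - m - r : ℕ) : ℝ) / n) ^ r * (exH r Fam n : ℝ) * Q
          = ((((n - m - r : ℕ) : ℝ) / n) ^ r * Q) * (exH r Fam n : ℝ) := by ring
        _ ≤ (P : ℝ) * (exH r Fam n : ℝ) := mul_le_mul_of_nonneg_right hqQ hEn
        _ ≤ (Q : ℝ) * (exH r Fam (n - m) : ℝ) := by exact_mod_cast hch
        _ = (exH r Fam (n - m) : ℝ) * Q := by ring
    have hsupR : (exH r Fam m : ℝ) + (exH r Fam (n - m) : ℝ) ≤ (exH r Fam n : ℝ) := by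
      exact_mod_cast hsup
    have hexpand : (1 - (((n - m - r : ℕ) : ℝ) / n) ^ r) * (exH r Fam n : ℝ)
        = (exH r Fam n : ℝ) - (((n - m - r : ℕ) : ℝ) / n) ^ r * (exH r Fam n : ℝ) := by
      ring
    rw [hexpand]
    linarith
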